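/- Let F0, F1, …, Fn be m×m real symmetric matrices with F0 positive semidefinite, and define p(x) = det(F0 + x1·F1 + … + xn·Fn) for x ∈ ℝⁿ. Then for every z ∈ ℝⁿ such that the univariate polynomial t ↦ p(t·z) is not the zero polynomial, every complex root of t ↦ p(t·z) is real; in particular, if F0 is positive definite then p satisfies the real zero condition at the origin. -/

import Mathlib

open Polynomial Matrix ComplexOrder

section Aux

variable {m : ℕ}

/-- For a Hermitian complex matrix, the quadratic form is star-fixed. -/
lemma herm_dot_star {M : Matrix (Fin m) (Fin m) ℂ} (hM : M.IsHermitian) (v : Fin m → ℂ) :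
    star (star v ⬝ᵥ M *ᵥ v) = star v ⬝ᵥ M *ᵥ v := by
  calc star (star v ⬝ᵥ M *ᵥ v) = star (M *ᵥ v) ⬝ᵥ star (star v) := by
        rw [star_dotProduct]; simp [mul_comm]
    _ = (star v ᵥ* Mᴴ) ⬝ᵥ v := by rw [star_mulVec, star_star]
    _ = star v ⬝ᵥ M *ᵥ v := by rw [← dotProduct_mulVec, hM.eq]

lemma herm_dot_im_zero {M : Matrix (Fin m) (Fin m) ℂ} (hM : M.IsHermitian) (v : Fin m → ℂ) :
    (star v ⬝ᵥ M *ᵥ v).im = 0 := by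
  have h := congrArg Complex.im (herm_dot_star hM v)
  simp only [Complex.star_def, Complex.conj_im] at h
  linarith

end Aux

/-- Let `F0, F1, …, Fn` be `m × m` real symmetric matrices with `F0`
positive semidefinite, and `p x = det (F0 + x 1 • F 1 + ⋯ + x n • F n)`. Then for every
`z ∈ ℝⁿ` such that the univariate polynomial `t ↦ p (t • z)` is not the zero polynomial,
every complex root of `t ↦ p (t • z)` is real; in particular, if `F0` is positive
definite then `p` satisfies the real zero condition at the origin. -/
theorem stmt1 (n m : ℕ) (F0 : Matrix (Fin m) (Fin m) ℝ)
    (F : Fin n → Matrix (Fin m) (Fin m) ℝ)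
    (hF0symm : F0.IsSymm) (hFsymm : ∀ i, (F i).IsSymm) (hF0 : F0.PosSemidef)
    (q : (Fin n → ℝ) → Polynomial ℝ)
    (hq : ∀ z : Fin n → ℝ,
      q z = (F0.map (Polynomial.C : ℝ → Polynomial ℝ) +
        ∑ i : Fin n, (Polynomial.C (z i) * Polynomial.X) • (F i).map Polynomial.C).det) :
    (∀ z : Fin n → ℝ, q z ≠ 0 →
      ∀ w : ℂ, ((q z).map (algebraMap ℝ ℂ)).IsRoot w → w.im = 0) ∧
    (F0.PosDef →
      ∀ z : Fin n → ℝ, ∀ w : ℂ, ((q z).map (algebraMap ℝ ℂ)).IsRoot w → w.im = 0) := by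
  set f := algebraMap ℝ ℂ with hf
  -- the key evaluation formula
  have heval : ∀ z : Fin n → ℝ, ∀ t : ℂ, Polynomial.eval₂ f t (q z)
      = (F0.map f + t • (∑ i, z i • F i).map f).det := by
    intro z t
    rw [hq z, show Polynomial.eval₂ f t = ⇑(Polynomial.eval₂RingHom f t) from rfl,
      RingHom.map_det]
    congr 1
    ext j k
    simp only [RingHom.mapMatrix_apply, Matrix.map_apply, Matrix.add_apply, Matrix.sum_apply,
      Matrix.smul_apply, smul_eq_mul, coe_eval₂RingHom, eval₂_add, eval₂_finset_sum,
      eval₂_mul, eval₂_C, eval₂_X, map_sum, _root_.map_mul, Finset.mul_sum]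
    exact congrArg₂ (· + ·) rfl (Finset.sum_congr rfl fun i _ => by ring)
  have main : ∀ z : Fin n → ℝ, q z ≠ 0 →
      ∀ w : ℂ, ((q z).map (algebraMap ℝ ℂ)).IsRoot w → w.im = 0 := by
    intro z hqz w hw
    set A : Matrix (Fin m) (Fin m) ℝ := ∑ i, z i • F i with hA
    have hAsymm : A.IsSymm := by
      unfold Matrix.IsSymm
      rw [hA, Matrix.transpose_sum]
      exact Finset.sum_congr rfl fun i _ => by rw [Matrix.transpose_smul, (hFsymm i).eq]
    set M0 : Matrix (Fin m) (Fin m) ℂ := F0.map f with hM0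
    set MA : Matrix (Fin m) (Fin m) ℂ := A.map f with hMA
    -- M0 is PSD over ℂ
    have hM0psd : M0.PosSemidef := by
      obtain ⟨B, hB⟩ : ∃ B : Matrix (Fin m) (Fin m) ℝ, F0 = Bᴴ * B := by
        open scoped MatrixOrder in exact CStarAlgebra.nonneg_iff_eq_star_mul_self.mp hF0.nonneg
      have hmm : M0 = (B.map f)ᴴ * (B.map f) := by
        rw [hM0, hB, show (Bᴴ * B).map f = f.mapMatrix Bᴴ * f.mapMatrix B from
          _root_.map_mul f.mapMatrix _ _]
        congr 1
        ext j k
        simp [Matrix.conjTranspose_apply, Matrix.map_apply, hf, Complex.conj_ofReal]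
      rw [hmm]
      exact Matrix.posSemidef_conjTranspose_mul_self _
    have hMAherm : MA.IsHermitian := by
      ext j k
      simp only [Matrix.conjTranspose_apply, hMA, Matrix.map_apply]
      rw [hAsymm.apply j k]
      simp [hf, Complex.conj_ofReal]
    have hdet : (M0 + w • MA).det = 0 := by
      rw [← heval z w, ← Polynomial.eval_map]
      exact hw
    obtain ⟨v, hv0, hv⟩ := Matrix.exists_mulVec_eq_zero_iff.mpr hdet
    have hsplit : M0 *ᵥ v + w • (MA *ᵥ v) = 0 := by
      simpa [Matrix.add_mulVec, Matrix.smul_mulVec] using hv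
    set α := star v ⬝ᵥ M0 *ᵥ v with hα
    set β := star v ⬝ᵥ MA *ᵥ v with hβ
    have hαβ : α + w * β = 0 := by
      have h := congrArg (fun u => star v ⬝ᵥ u) hsplit
      simpa [dotProduct_add, dotProduct_smul, smul_eq_mul] using h
    have hαim : α.im = 0 := herm_dot_im_zero hM0psd.isHermitian v
    have hβim : β.im = 0 := herm_dot_im_zero hMAherm v
    by_cases hb : β = 0
    · -- degenerate case: quadratic form of A vanishes
      have hα0 : α = 0 := by rw [hb] at hαβ; simpa using hαβ
      have hM0v : M0 *ᵥ v = 0 := (hM0psd.dotProduct_mulVec_zero_iff v).mp hα0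
      by_cases hw0 : w = 0
      · simp [hw0]
      · have hMAv : MA *ᵥ v = 0 := by
          have h2 : w • (MA *ᵥ v) = 0 := by
            rw [hM0v] at hsplit; simpa using hsplit
          rcases smul_eq_zero.mp h2 with h | h
          · exact absurd h hw0
          · exact h
        exfalso
        apply hqz
        have hmap0 : (q z).map f = 0 := by
          apply Polynomial.zero_of_eval_zero
          intro t
          rw [Polynomial.eval_map, heval z t]
          apply Matrix.exists_mulVec_eq_zero_iff.mp
          refine ⟨v, hv0, ?_⟩
          show (M0 + t • MA) *ᵥ v = 0
          rw [Matrix.add_mulVec, Matrix.smul_mulVec, hM0v, hMAv]; simp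
        exact (Polynomial.map_eq_zero_iff (algebraMap ℝ ℂ).injective).mp hmap0
    · -- main case: w = -α/β is real
      have hβre : β.re ≠ 0 := fun h => hb (Complex.ext h hβim)
      have him : (α + w * β).im = 0 := by rw [hαβ]; simp
      simp only [Complex.add_im, Complex.mul_im, hαim, hβim, mul_zero, zero_add] at him
      have hz : w.im * β.re = 0 := by linarith
      exact (mul_eq_zero.mp hz).resolve_right hβre
  refine ⟨main, fun hpd z w hw => ?_⟩
  apply main z ?_ w hw
  intro h0
  have h1 := heval z 0
  rw [h0] at h1
  simp only [Polynomial.eval₂_zero, zero_smul, add_zero] at h1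
  have h2 : f F0.det = 0 := by
    rw [RingHom.map_det]
    exact h1.symm
  have h3 : F0.det = 0 := (algebraMap ℝ ℂ).injective (h2.trans (map_zero f).symm)
  exact absurd h3 (ne_of_gt hpd.det_pos)
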